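/- Let X be a CAT(0) cube complex whose hyperplanes carry an l-controlled colouring c : H → {0,1} (no monochromatic inward geodesic of length > l). Let π : X → X̂ be the canonical quotient map to the cube complex X̂ whose hyperplanes are the 0-coloured ones. Then π is cobornologous on vertices: for every R, if d(π(x),π(y)) ≤ R for vertices x,y, then d(x,y) ≤ (l+1)(R+2). -/

import Mathlib

/-- An abstract model of the vertex set of a CAT(0) cube complex with its hyperplanes: a
connected graph `G` on the vertices `V`, a side function `side h v` (`true` iff `v` lies on the
side of `h` away from the basepoint `x0`), such that two vertices are adjacent iff exactly one
hyperplane separates them, the graph distance is the number of separating hyperplanes, and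
medians exist. -/
structure CubeGraph (V H : Type*) where
  G : SimpleGraph V
  side : H → V → Bool
  x0 : V
  basepoint : ∀ h, side h x0 = false
  sepFinite : ∀ x y : V, {h | side h x ≠ side h y}.Finite
  connected : G.Connected
  adj_iff : ∀ x y : V, G.Adj x y ↔ ∃! h : H, side h x ≠ side h y
  dist_eq : ∀ x y : V, G.dist x y = {h | side h x ≠ side h y}.ncard
  median : ∀ x y z : V, ∃ m : V, ∀ h : H,
    side h m = ((side h x && side h y) || (side h y && side h z) || (side h x && side h z))

namespace CubeGraph

variable {V H : Type*} (M : CubeGraph V H)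

/-- The set of hyperplanes adjacent to `x` (bounding an edge at `x`) which separate `x`
from the basepoint. -/
def Hx (x : V) : Set H :=
  {k | M.side k x = true ∧ ∃ y : V, M.G.Adj x y ∧ M.side k y = false}

/-- `k < h`: the outward halfspace of `k` strictly contains that of `h`. -/
def Lt (k h : H) : Prop := {v | M.side h v = true} ⊂ {v | M.side k v = true}

/-- `k` is a predecessor of `h`: `k < h` with nothing strictly between. -/
def Pred (k h : H) : Prop := M.Lt k h ∧ ¬ ∃ j, M.Lt k j ∧ M.Lt j h

end CubeGraph

namespace CubeGraph

variable {V H : Type*} (M : CubeGraph V H)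

/-- An inward edge path: each edge moves strictly closer to the basepoint (hence it is a
geodesic). -/
def IsInward {n : ℕ} (v : Fin (n + 1) → V) : Prop :=
  (∀ i : Fin n, M.G.Adj (v i.castSucc) (v i.succ)) ∧
    ∀ i : Fin n, M.G.dist M.x0 (v i.succ) < M.G.dist M.x0 (v i.castSucc)

/-- A path is monochromatic for the colouring `c` if all hyperplanes it crosses have the same
colour. -/
def IsMono (c : H → Bool) {n : ℕ} (v : Fin (n + 1) → V) : Prop :=
  ∃ b : Bool, ∀ i : Fin n, ∀ h : H,
    M.side h (v i.castSucc) ≠ M.side h (v i.succ) → c h = b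

/-- `c` is an `l`-controlled colouring: no monochromatic inward geodesic has length `> l`. -/
def Controlled (l : ℕ) (c : H → Bool) : Prop :=
  ∀ n : ℕ, ∀ v : Fin (n + 1) → V, M.IsInward v → M.IsMono c v → n ≤ l

end CubeGraph

namespace CubeGraph

variable {V H : Type*}

lemma keyA (M : CubeGraph V H) (l : ℕ) (c : H → Bool) (hc : M.Controlled l c)
    (x z : V) (hsub : ∀ h : H, M.side h z = true → M.side h x = true) :
    {h : H | M.side h x ≠ M.side h z}.ncard ≤
      (l + 1) * ({h : H | M.side h x ≠ M.side h z ∧ c h = false}.ncard + 1) := by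
  classical
  set S : Set H := {h : H | M.side h x ≠ M.side h z} with hS
  have hSfin : S.Finite := M.sepFinite x z
  obtain ⟨p, hp⟩ := M.connected.exists_walk_length_eq_dist x z
  set n : ℕ := p.length with hnp
  have hn : n = S.ncard := by rw [hp, M.dist_eq]
  set v : ℕ → V := fun k => p.getVert k with hv
  have hv0 : v 0 = x := p.getVert_zero
  have hvn : v n = z := p.getVert_length
  -- each edge flips a unique hyperplane
  have hex : ∀ k : ℕ, k < n → ∃! h : H, M.side h (v k) ≠ M.side h (v (k + 1)) :=
    fun k hk => (M.adj_iff _ _).mp (p.adj_getVert_succ hk)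
  set F : Fin n → H := fun i => (hex i i.isLt).choose with hF
  have hflip : ∀ i : Fin n, M.side (F i) (v i) ≠ M.side (F i) (v (i + 1)) :=
    fun i => (hex i i.isLt).choose_spec.1
  have huniq : ∀ (i : Fin n) (h : H), M.side h (v i) ≠ M.side h (v (i + 1)) → h = F i :=
    fun i h hh => (hex i i.isLt).choose_spec.2 h hh
  -- constancy of sides along flip-free stretches
  have hconst : ∀ (h : H) (a k : ℕ), a ≤ k →
      (∀ j, a ≤ j → j < k → M.side h (v j) = M.side h (v (j + 1))) →
      M.side h (v k) = M.side h (v a) := by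
    intro h a k hak hnf
    induction k, hak using Nat.le_induction with
    | base => rfl
    | succ k hak ih =>
      rw [← hnf k hak (Nat.lt_succ_self k)]
      exact ih fun j hj1 hj2 => hnf j hj1 (Nat.lt_succ_of_lt hj2)
  -- every separating hyperplane flips somewhere
  have hcover : ∀ h ∈ S, ∃ i : Fin n, h = F i := by
    intro h hh
    by_contra hcon
    push_neg at hcon
    have : M.side h (v n) = M.side h (v 0) := by
      refine hconst h 0 n (Nat.zero_le _) fun j _ hj => ?_
      by_contra hne
      exact hcon ⟨j, hj⟩ (huniq ⟨j, hj⟩ h hne)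
    rw [hv0, hvn] at this
    exact hh this.symm
  have hrange : S = Set.range F := by
    refine Set.eq_of_subset_of_ncard_le (fun h hh => ?_) ?_ (Set.finite_range F)
    · obtain ⟨i, hi⟩ := hcover h hh
      exact ⟨i, hi.symm⟩
    · calc (Set.range F).ncard = (Finset.univ.image F).card := by
            rw [← Set.ncard_coe_finset]; congr 1; simp
        _ ≤ (Finset.univ : Finset (Fin n)).card := Finset.card_image_le
        _ = n := by simp
        _ = S.ncard := hn
  have hFinj : Function.Injective F := by
    have hcard : (Finset.univ.image F).card = (Finset.univ : Finset (Fin n)).card := by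
      have h1 : (Finset.univ.image F : Set H) = S := by
        rw [hrange]; simp
      have : (Finset.univ.image F).card = S.ncard := by
        rw [← Set.ncard_coe_finset, h1]
      rw [this, ← hn]; simp
    have := (Finset.card_image_iff).mp hcard
    intro a b hab
    exact this (Finset.mem_univ a) (Finset.mem_univ b) hab
  -- F i flips only at edge i
  have hside_le : ∀ (i : Fin n) (k : ℕ), k ≤ (i : ℕ) → M.side (F i) (v k) = M.side (F i) x := by
    intro i k hk
    rw [← hv0]
    refine hconst (F i) 0 k (Nat.zero_le _) fun j _ hj => ?_
    by_contra hne
    have hj' : j < n := lt_of_lt_of_le (lt_of_lt_of_le hj hk) (le_of_lt i.isLt)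
    have heq : (i : ℕ) = j := congrArg Fin.val (hFinj (huniq ⟨j, hj'⟩ (F i) hne))
    omega
  have hside_ge : ∀ (i : Fin n) (k : ℕ), (i : ℕ) + 1 ≤ k → k ≤ n →
      M.side (F i) (v k) = M.side (F i) z := by
    intro i k hk1 hk2
    have h1 : M.side (F i) (v n) = M.side (F i) (v k) := by
      refine hconst (F i) k n hk2 fun j hj1 hj2 => ?_
      by_contra hne
      have heq : (i : ℕ) = j := congrArg Fin.val (hFinj (huniq ⟨j, hj2⟩ (F i) hne))
      omega
    rw [← hvn, h1]
  have hFS : ∀ i : Fin n, F i ∈ S := by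
    intro i; rw [hrange]; exact Set.mem_range_self i
  have hFx : ∀ i : Fin n, M.side (F i) x = true ∧ M.side (F i) z = false := by
    intro i
    have hne : M.side (F i) x ≠ M.side (F i) z := hFS i
    cases hx : M.side (F i) x <;> cases hz : M.side (F i) z
    · rw [hx, hz] at hne; exact absurd rfl hne
    · exact absurd (hsub _ hz) (by rw [hx]; simp)
    · exact ⟨rfl, rfl⟩
    · rw [hx, hz] at hne; exact absurd rfl hne
  have hside_i : ∀ i : Fin n, M.side (F i) (v i) = true :=
    fun i => by rw [hside_le i i le_rfl]; exact (hFx i).1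
  have hside_i1 : ∀ i : Fin n, M.side (F i) (v ((i : ℕ) + 1)) = false :=
    fun i => by rw [hside_ge i ((i : ℕ) + 1) le_rfl i.isLt]; exact (hFx i).2
  -- halfspace sets and distance to basepoint
  have hdist0 : ∀ w : V, M.G.dist M.x0 w = {h : H | M.side h w = true}.ncard := by
    intro w
    rw [M.dist_eq]
    congr 1
    ext h
    simp only [Set.mem_setOf_eq, M.basepoint h]
    cases hw : M.side h w <;> simp
  have hTfin : ∀ w : V, {h : H | M.side h w = true}.Finite := by
    intro w
    have : {h : H | M.side h w = true} ⊆ {h : H | M.side h M.x0 ≠ M.side h w} := by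
      intro h hh
      simp only [Set.mem_setOf_eq] at hh ⊢
      rw [M.basepoint h, hh]; simp
    exact (M.sepFinite M.x0 w).subset this
  have hstep : ∀ i : Fin n,
      {h : H | M.side h (v ((i : ℕ) + 1)) = true} = {h : H | M.side h (v i) = true} \ {F i} := by
    intro i
    ext h
    simp only [Set.mem_setOf_eq, Set.mem_diff, Set.mem_singleton_iff]
    by_cases hh : h = F i
    · subst hh
      rw [hside_i i, hside_i1 i]
      simp
    · have : M.side h (v i) = M.side h (v ((i : ℕ) + 1)) := by
        by_contra hne
        exact hh (huniq i h hne)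
      rw [this]
      tauto
  have hinw : ∀ i : Fin n, M.G.dist M.x0 (v ((i : ℕ) + 1)) < M.G.dist M.x0 (v i) := by
    intro i
    rw [hdist0, hdist0, hstep i]
    exact Set.ncard_diff_singleton_lt_of_mem (hside_i i) (hTfin _)
  -- each block of l+1 consecutive edges contains a 0-coloured hyperplane
  have hblock : ∀ a : ℕ, a + (l + 1) ≤ n →
      ∃ i : Fin n, a ≤ (i : ℕ) ∧ (i : ℕ) < a + (l + 1) ∧ c (F i) = false := by
    intro a ha
    by_contra hcon
    push_neg at hcon
    set w : Fin (l + 1 + 1) → V := fun i => v (a + i) with hw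
    have hlt : ∀ i : Fin (l + 1), a + (i : ℕ) < n := by
      intro i; have := i.isLt; omega
    have hinward : M.IsInward w := by
      constructor
      · intro i
        have : a + ((i : ℕ) + 1) = a + (i : ℕ) + 1 := by omega
        simp only [hw, Fin.coe_castSucc, Fin.val_succ, this]
        exact p.adj_getVert_succ (hlt i)
      · intro i
        have h1 : a + ((i : ℕ) + 1) = a + (i : ℕ) + 1 := by omega
        simp only [hw, Fin.coe_castSucc, Fin.val_succ, h1]
        exact hinw ⟨a + (i : ℕ), hlt i⟩
    have hmono : M.IsMono c w := by
      refine ⟨true, fun i h hh => ?_⟩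
      have h1 : a + ((i : ℕ) + 1) = a + (i : ℕ) + 1 := by omega
      simp only [hw, Fin.coe_castSucc, Fin.val_succ, h1] at hh
      have := huniq ⟨a + (i : ℕ), hlt i⟩ h hh
      subst this
      have h2 := hcon ⟨a + (i : ℕ), hlt i⟩ (Nat.le_add_right a i) (show a + (i : ℕ) < a + (l + 1) by have := i.isLt; omega)
      cases hcc : c (F ⟨a + (i : ℕ), hlt i⟩)
      · exact absurd hcc h2
      · rfl
    have := hc (l + 1) w hinward hmono
    omega
  -- counting
  set Q : Finset (Fin n) := Finset.univ.filter (fun i => c (F i) = false) with hQ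
  have ht : n / (l + 1) ≤ Q.card := by
    have hpick : ∀ j ∈ Finset.range (n / (l + 1)),
        ∃ i : Fin n, i ∈ Q ∧ j * (l + 1) ≤ (i : ℕ) ∧ (i : ℕ) < j * (l + 1) + (l + 1) := by
      intro j hj
      rw [Finset.mem_range] at hj
      have hle : j * (l + 1) + (l + 1) ≤ n := by
        calc j * (l + 1) + (l + 1) = (j + 1) * (l + 1) := by ring
          _ ≤ (n / (l + 1)) * (l + 1) := Nat.mul_le_mul_right _ hj
          _ ≤ n := Nat.div_mul_le_self n (l + 1)
      obtain ⟨i, hi1, hi2, hi3⟩ := hblock (j * (l + 1)) hle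
      exact ⟨i, by simp [hQ, hi3], hi1, hi2⟩
    rcases Nat.eq_zero_or_pos (n / (l + 1)) with h0 | h0
    · omega
    have hnpos : 0 < n := by
      have := Nat.div_le_self n (l + 1)
      omega
    haveI : Nonempty (Fin n) := ⟨⟨0, hnpos⟩⟩
    set g : ℕ → Fin n := fun j =>
      if hj : j * (l + 1) + (l + 1) ≤ n then
        (Classical.choose (hblock (j * (l + 1)) hj)) else Classical.arbitrary _ with hg
    have hgspec : ∀ j ∈ Finset.range (n / (l + 1)),
        c (F (g j)) = false ∧ j * (l + 1) ≤ ((g j : Fin n) : ℕ) ∧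
          ((g j : Fin n) : ℕ) < j * (l + 1) + (l + 1) := by
      intro j hj
      rw [Finset.mem_range] at hj
      have hle : j * (l + 1) + (l + 1) ≤ n := by
        calc j * (l + 1) + (l + 1) = (j + 1) * (l + 1) := by ring
          _ ≤ (n / (l + 1)) * (l + 1) := Nat.mul_le_mul_right _ hj
          _ ≤ n := Nat.div_mul_le_self n (l + 1)
      have hspec := Classical.choose_spec (hblock (j * (l + 1)) hle)
      simp only [hg, hle, dif_pos]
      exact ⟨hspec.2.2, hspec.1, hspec.2.1⟩
    have hdivg : ∀ j ∈ Finset.range (n / (l + 1)), ((g j : Fin n) : ℕ) / (l + 1) = j := by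
      intro j hj
      obtain ⟨_, hg2, hg3⟩ := hgspec j hj
      refine Nat.div_eq_of_lt_le hg2 ?_
      have : (j + 1) * (l + 1) = j * (l + 1) + (l + 1) := by ring
      omega
    calc n / (l + 1) = (Finset.range (n / (l + 1))).card := (Finset.card_range _).symm
      _ ≤ Q.card := by
          refine Finset.card_le_card_of_injOn g ?_ ?_
          · intro j hj
            rw [Finset.mem_coe, hQ, Finset.mem_filter]
            exact ⟨Finset.mem_univ _, (hgspec j hj).1⟩
          · intro j1 h1 j2 h2 heq
            rw [← hdivg j1 h1, ← hdivg j2 h2, heq]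
  have hfin : n < (n / (l + 1) + 1) * (l + 1) := by
    have h1 := Nat.div_add_mod n (l + 1)
    have h2 := Nat.mod_lt n (Nat.succ_pos l)
    calc n = (l + 1) * (n / (l + 1)) + n % (l + 1) := h1.symm
      _ < (l + 1) * (n / (l + 1)) + (l + 1) := Nat.add_lt_add_left h2 _
      _ = (n / (l + 1) + 1) * (l + 1) := by ring
  have hQq : Q.card ≤ {h : H | M.side h x ≠ M.side h z ∧ c h = false}.ncard := by
    have hinj : (Q.image F).card = Q.card := Finset.card_image_of_injective Q hFinj
    have hsub2 : (Q.image F : Set H) ⊆ {h : H | M.side h x ≠ M.side h z ∧ c h = false} := by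
      intro h hh
      simp only [Finset.coe_image, Set.mem_image, Finset.mem_coe] at hh
      obtain ⟨i, hi, rfl⟩ := hh
      rw [hQ, Finset.mem_filter] at hi
      exact ⟨hFS i, hi.2⟩
    have hfintgt : {h : H | M.side h x ≠ M.side h z ∧ c h = false}.Finite :=
      hSfin.subset fun h hh => hh.1
    calc Q.card = (Q.image F : Set H).ncard := by rw [Set.ncard_coe_finset, hinj]
      _ ≤ _ := Set.ncard_le_ncard hsub2 hfintgt
  calc S.ncard = n := hn.symm
    _ ≤ (n / (l + 1) + 1) * (l + 1) := le_of_lt hfin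
    _ ≤ (Q.card + 1) * (l + 1) := Nat.mul_le_mul_right _ (by omega)
    _ = (l + 1) * (Q.card + 1) := Nat.mul_comm _ _
    _ ≤ (l + 1) * ({h : H | M.side h x ≠ M.side h z ∧ c h = false}.ncard + 1) :=
        Nat.mul_le_mul_left _ (by omega)

end CubeGraph

/-- If `c` is an `l`-controlled colouring (0-coloured = `false`), then the canonical quotient
map `π` to the cube complex on the 0-coloured hyperplanes is cobornologous on vertices: since
`d(π x, π y)` is the number of 0-coloured hyperplanes separating `x, y`, if this is at most `R`
then `d(x,y) ≤ (l+1)(R+2)`. -/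
theorem stmt16 {V H : Type*} (M : CubeGraph V H) (l : ℕ) (c : H → Bool)
    (hc : M.Controlled l c) (x y : V) (R : ℕ)
    (hR : {h : H | M.side h x ≠ M.side h y ∧ c h = false}.ncard ≤ R) :
    {h : H | M.side h x ≠ M.side h y}.ncard ≤ (l + 1) * (R + 2) := by
  classical
  obtain ⟨m, hm⟩ := M.median x y M.x0
  have hmside : ∀ h : H, M.side h m = (M.side h x && M.side h y) := by
    intro h
    rw [hm h, M.basepoint h]
    cases M.side h x <;> cases M.side h y <;> rfl
  have hsubx : ∀ h : H, M.side h m = true → M.side h x = true := by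
    intro h hh
    rw [hmside h] at hh
    exact (Bool.and_eq_true _ _).mp hh |>.1
  have hsuby : ∀ h : H, M.side h m = true → M.side h y = true := by
    intro h hh
    rw [hmside h] at hh
    exact (Bool.and_eq_true _ _).mp hh |>.2
  have hA := CubeGraph.keyA M l c hc x m hsubx
  have hB := CubeGraph.keyA M l c hc y m hsuby
  have hxm : {h : H | M.side h x ≠ M.side h m} =
      {h : H | M.side h x = true ∧ M.side h y = false} := by
    ext h
    simp only [Set.mem_setOf_eq, hmside h]
    cases M.side h x <;> cases M.side h y <;> simp
  have hym : {h : H | M.side h y ≠ M.side h m} =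
      {h : H | M.side h y = true ∧ M.side h x = false} := by
    ext h
    simp only [Set.mem_setOf_eq, hmside h]
    cases M.side h x <;> cases M.side h y <;> simp
  have hunion : {h : H | M.side h x ≠ M.side h y} =
      {h : H | M.side h x ≠ M.side h m} ∪ {h : H | M.side h y ≠ M.side h m} := by
    rw [hxm, hym]
    ext h
    simp only [Set.mem_setOf_eq, Set.mem_union]
    cases M.side h x <;> cases M.side h y <;> simp
  have hdisj : Disjoint {h : H | M.side h x ≠ M.side h m} {h : H | M.side h y ≠ M.side h m} := by
    rw [hxm, hym, Set.disjoint_left]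
    rintro h ⟨h1, h2⟩ ⟨h3, h4⟩
    rw [h1] at h4
    exact absurd h4 (by simp)
  have hfinxm : {h : H | M.side h x ≠ M.side h m}.Finite := M.sepFinite x m
  have hfinym : {h : H | M.side h y ≠ M.side h m}.Finite := M.sepFinite y m
  have hcard : {h : H | M.side h x ≠ M.side h y}.ncard =
      {h : H | M.side h x ≠ M.side h m}.ncard + {h : H | M.side h y ≠ M.side h m}.ncard := by
    rw [hunion]
    exact Set.ncard_union_eq hdisj hfinxm hfinym
  -- the 0-coloured separators also split
  have hqdisj : Disjoint {h : H | M.side h x ≠ M.side h m ∧ c h = false}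
      {h : H | M.side h y ≠ M.side h m ∧ c h = false} := by
    refine Set.disjoint_left.mpr fun h hh1 hh2 => ?_
    exact Set.disjoint_left.mp hdisj hh1.1 hh2.1
  have hqfin1 : {h : H | M.side h x ≠ M.side h m ∧ c h = false}.Finite :=
    hfinxm.subset fun h hh => hh.1
  have hqfin2 : {h : H | M.side h y ≠ M.side h m ∧ c h = false}.Finite :=
    hfinym.subset fun h hh => hh.1
  have hqsub : {h : H | M.side h x ≠ M.side h m ∧ c h = false} ∪
      {h : H | M.side h y ≠ M.side h m ∧ c h = false} ⊆
      {h : H | M.side h x ≠ M.side h y ∧ c h = false} := by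
    rintro h (⟨hh1, hh2⟩ | ⟨hh1, hh2⟩)
    · refine ⟨?_, hh2⟩
      have : h ∈ {h : H | M.side h x ≠ M.side h m} ∪ {h : H | M.side h y ≠ M.side h m} :=
        Set.mem_union_left _ hh1
      rw [← hunion] at this
      exact this
    · refine ⟨?_, hh2⟩
      have : h ∈ {h : H | M.side h x ≠ M.side h m} ∪ {h : H | M.side h y ≠ M.side h m} :=
        Set.mem_union_right _ hh1
      rw [← hunion] at this
      exact this
  have hqle : {h : H | M.side h x ≠ M.side h m ∧ c h = false}.ncard +
      {h : H | M.side h y ≠ M.side h m ∧ c h = false}.ncard ≤ R := by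
    have h1 := Set.ncard_union_eq hqdisj hqfin1 hqfin2
    have h2 : ({h : H | M.side h x ≠ M.side h m ∧ c h = false} ∪
        {h : H | M.side h y ≠ M.side h m ∧ c h = false}).ncard ≤
        {h : H | M.side h x ≠ M.side h y ∧ c h = false}.ncard :=
      Set.ncard_le_ncard hqsub ((M.sepFinite x y).subset fun h hh => hh.1)
    omega
  set q1 := {h : H | M.side h x ≠ M.side h m ∧ c h = false}.ncard
  set q2 := {h : H | M.side h y ≠ M.side h m ∧ c h = false}.ncard
  calc {h : H | M.side h x ≠ M.side h y}.ncard
      = {h : H | M.side h x ≠ M.side h m}.ncard +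
        {h : H | M.side h y ≠ M.side h m}.ncard := hcard
    _ ≤ (l + 1) * (q1 + 1) + (l + 1) * (q2 + 1) := Nat.add_le_add hA hB
    _ = (l + 1) * (q1 + q2 + 2) := by ring
    _ ≤ (l + 1) * (R + 2) := Nat.mul_le_mul_left _ (by omega)
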